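/- Let n ≥ 2 and let A, B ∈ Fₙ([0,1]) be such that |A| = |B| ≥ 2, A ∩ {0,1} ≠ ∅, and B ∩ {0,1} ≠ ∅. Then there exists a homeomorphism h : Fₙ([0,1]) → Fₙ([0,1]) such that h(B) = A. -/

import Mathlib

open TopologicalSpace

/-- The `n`-th symmetric product `Fₙ(X)`: nonempty subsets of `X` with at most `n` points,
topologized as a subspace of the hyperspace of nonempty compact sets with the Hausdorff
metric (which induces the Vietoris topology). -/
def SymmProd (X : Type*) [MetricSpace X] (n : ℕ) : Type _ :=
  {A : NonemptyCompacts X // (A : Set X).Finite ∧ (A : Set X).ncard ≤ n}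

noncomputable instance {X : Type*} [MetricSpace X] {n : ℕ} : MetricSpace (SymmProd X n) := by
  unfold SymmProd; infer_instance

def SymmProd.toSet {X : Type*} [MetricSpace X] {n : ℕ} (A : SymmProd X n) : Set X := A.1

open Set Metric

namespace SP

variable {n : ℕ}

noncomputable def rset (C : SymmProd unitInterval n) : Set ℝ := Subtype.val '' C.toSet

lemma rset_finite (C : SymmProd unitInterval n) : (rset C).Finite := C.2.1.image _

lemma rset_nonempty (C : SymmProd unitInterval n) : (rset C).Nonempty :=
  (C.1.nonempty).image _

lemma rset_subset (C : SymmProd unitInterval n) : rset C ⊆ Icc (0:ℝ) 1 := by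
  rintro x ⟨y, _, rfl⟩; exact y.2

lemma rset_ncard (C : SymmProd unitInterval n) : (rset C).ncard = C.toSet.ncard :=
  Set.ncard_image_of_injective _ Subtype.val_injective

lemma rset_ncard_le (C : SymmProd unitInterval n) : (rset C).ncard ≤ n := by
  rw [rset_ncard]; exact C.2.2

lemma rset_inj {C D : SymmProd unitInterval n} (h : rset C = rset D) : C = D := by
  apply Subtype.ext
  apply NonemptyCompacts.ext
  exact Set.image_injective.2 Subtype.val_injective h

lemma dist_eq_rset (C D : SymmProd unitInterval n) :
    dist C D = hausdorffDist (rset C) (rset D) := by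
  have h1 : dist C D = dist C.1 D.1 := rfl
  rw [h1, NonemptyCompacts.dist_eq, rset, rset]
  exact (hausdorffDist_image isometry_subtype_coe).symm

lemma edist_ne_top (C D : SymmProd unitInterval n) :
    EMetric.hausdorffEdist (rset C) (rset D) ≠ ⊤ :=
  hausdorffEdist_ne_top_of_nonempty_of_bounded (rset_nonempty C) (rset_nonempty D)
    (rset_finite C).isBounded (rset_finite D).isBounded

/-- Constructor from a set of reals. -/
noncomputable def mk (s : Set ℝ) (hs : s ⊆ Icc (0:ℝ) 1) (hfin : s.Finite) (hne : s.Nonempty)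
    (hcard : s.ncard ≤ n) : SymmProd unitInterval n := by
  refine ⟨⟨⟨Subtype.val ⁻¹' s, ?_⟩, ?_⟩, ?_, ?_⟩
  · exact (hfin.preimage (Subtype.val_injective.injOn)).isCompact
  · obtain ⟨x, hx⟩ := hne
    exact ⟨⟨x, hs hx⟩, hx⟩
  · show (Subtype.val ⁻¹' s : Set unitInterval).Finite
    exact hfin.preimage (Subtype.val_injective.injOn)
  · show (Subtype.val ⁻¹' s : Set unitInterval).ncard ≤ n
    calc (Subtype.val ⁻¹' s : Set unitInterval).ncard
        = (Subtype.val '' (Subtype.val ⁻¹' s : Set unitInterval)).ncard :=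
          (Set.ncard_image_of_injective _ Subtype.val_injective).symm
      _ = s.ncard := by rw [Set.image_preimage_eq_of_subset]; rwa [Subtype.range_val]
      _ ≤ n := hcard

lemma rset_mk (s : Set ℝ) (hs : s ⊆ Icc (0:ℝ) 1) (hfin : s.Finite) (hne : s.Nonempty)
    (hcard : s.ncard ≤ n) : rset (mk s hs hfin hne hcard) = s := by
  show Subtype.val '' (Subtype.val ⁻¹' s) = s
  rw [Set.image_preimage_eq_of_subset]; rwa [Subtype.range_val]

noncomputable def mn (C : SymmProd unitInterval n) : ℝ := sInf (rset C)
noncomputable def mx (C : SymmProd unitInterval n) : ℝ := sSup (rset C)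

lemma mn_mem (C : SymmProd unitInterval n) : mn C ∈ rset C :=
  (rset_nonempty C).csInf_mem (rset_finite C)

lemma mx_mem (C : SymmProd unitInterval n) : mx C ∈ rset C :=
  (rset_nonempty C).csSup_mem (rset_finite C)

lemma mn_le {C : SymmProd unitInterval n} {x : ℝ} (hx : x ∈ rset C) : mn C ≤ x :=
  csInf_le (rset_finite C).bddBelow hx

lemma le_mx {C : SymmProd unitInterval n} {x : ℝ} (hx : x ∈ rset C) : x ≤ mx C :=
  le_csSup (rset_finite C).bddAbove hx

lemma mn_nonneg (C : SymmProd unitInterval n) : 0 ≤ mn C := (rset_subset C (mn_mem C)).1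
lemma mx_le_one (C : SymmProd unitInterval n) : mx C ≤ 1 := (rset_subset C (mx_mem C)).2
lemma mn_le_mx (C : SymmProd unitInterval n) : mn C ≤ mx C := mn_le (mx_mem C)

/-- Points of close sets are close to the other set. -/
lemma exists_close {C D : SymmProd unitInterval n} {x : ℝ} (hx : x ∈ rset C) {r : ℝ}
    (h : dist C D < r) : ∃ y ∈ rset D, |x - y| < r := by
  rw [dist_eq_rset] at h
  obtain ⟨y, hy, hxy⟩ := exists_dist_lt_of_hausdorffDist_lt hx h (edist_ne_top C D)
  exact ⟨y, hy, by rwa [Real.dist_eq] at hxy⟩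

lemma abs_mn_sub_le (C D : SymmProd unitInterval n) : |mn C - mn D| ≤ dist C D := by
  rw [abs_sub_le_iff]
  constructor <;>
  · apply le_of_forall_pos_le_add
    intro ε hε
    first
    | { obtain ⟨y, hy, hxy⟩ := exists_close (mn_mem D) (show dist D C < dist C D + ε by
          rw [dist_comm]; linarith)
        have := mn_le hy
        have := abs_sub_lt_iff.1 hxy
        linarith [this.1, this.2] }
    | { obtain ⟨y, hy, hxy⟩ := exists_close (mn_mem C) (show dist C D < dist C D + ε by linarith)
        have := mn_le hy
        have := abs_sub_lt_iff.1 hxy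
        linarith [this.1, this.2] }

end SP

namespace SP
variable {n : ℕ}

lemma abs_mx_sub_le (C D : SymmProd unitInterval n) : |mx C - mx D| ≤ dist C D := by
  rw [abs_sub_le_iff]
  constructor <;>
  · apply le_of_forall_pos_le_add
    intro ε hε
    first
    | { obtain ⟨y, hy, hxy⟩ := exists_close (mx_mem C) (show dist C D < dist C D + ε by linarith)
        have h2 := le_mx hy
        have h3 := abs_sub_lt_iff.1 hxy
        linarith [h3.1, h3.2] }
    | { obtain ⟨y, hy, hxy⟩ := exists_close (mx_mem D) (show dist D C < dist C D + ε by
          rw [dist_comm]; linarith)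
        have h2 := le_mx hy
        have h3 := abs_sub_lt_iff.1 hxy
        linarith [h3.1, h3.2] }

lemma dist_le_of_approx {C D : SymmProd unitInterval n} {ε : ℝ} (hε : 0 ≤ ε)
    (h1 : ∀ x ∈ rset C, ∃ y ∈ rset D, |x - y| ≤ ε)
    (h2 : ∀ y ∈ rset D, ∃ x ∈ rset C, |y - x| ≤ ε) : dist C D ≤ ε := by
  rw [dist_eq_rset]
  apply hausdorffDist_le_of_mem_dist hε
  · intro x hx; obtain ⟨y, hy, h⟩ := h1 x hx; exact ⟨y, hy, by rwa [Real.dist_eq]⟩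
  · intro y hy; obtain ⟨x, hx, h⟩ := h2 y hy; exact ⟨x, hx, by rwa [Real.dist_eq]⟩

lemma dist_le_of_subset_Icc {C D : SymmProd unitInterval n} {a b : ℝ} (hab : a ≤ b)
    (h1 : rset C ⊆ Icc a b) (h2 : rset D ⊆ Icc a b) : dist C D ≤ b - a := by
  apply dist_le_of_approx (by linarith)
  · intro x hx
    obtain ⟨y, hy⟩ := rset_nonempty D
    refine ⟨y, hy, ?_⟩
    have := h1 hx; have := h2 hy
    rw [abs_sub_le_iff]; constructor <;> simp_all [Set.mem_Icc] <;> linarith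
  · intro y hy
    obtain ⟨x, hx⟩ := rset_nonempty C
    refine ⟨x, hx, ?_⟩
    have := h1 hx; have := h2 hy
    rw [abs_sub_le_iff]; constructor <;> simp_all [Set.mem_Icc] <;> linarith

/-- Image map construction. -/
noncomputable def imap (F : SymmProd unitInterval n → ℝ → ℝ)
    (hF : ∀ C, MapsTo (F C) (rset C) (Icc (0:ℝ) 1)) (C : SymmProd unitInterval n) :
    SymmProd unitInterval n :=
  mk (F C '' rset C) (Set.mapsTo_iff_image_subset.mp (hF C)) ((rset_finite C).image _)
    ((rset_nonempty C).image _)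
    (le_trans (Set.ncard_image_le (rset_finite C)) (rset_ncard_le C))

lemma rset_imap (F : SymmProd unitInterval n → ℝ → ℝ)
    (hF : ∀ C, MapsTo (F C) (rset C) (Icc (0:ℝ) 1)) (C : SymmProd unitInterval n) :
    rset (imap F hF C) = F C '' rset C := rset_mk _ _ _ _ _

lemma continuousAt_imap (F : SymmProd unitInterval n → ℝ → ℝ)
    (hF : ∀ C, MapsTo (F C) (rset C) (Icc (0:ℝ) 1)) (C₀ : SymmProd unitInterval n)
    (H : ∀ ε > (0:ℝ), ∃ δ > (0:ℝ), ∀ C, dist C C₀ < δ →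
      ∀ x ∈ rset C, ∀ y ∈ rset C₀, |x - y| < δ → |F C x - F C₀ y| ≤ ε) :
    ContinuousAt (imap F hF) C₀ := by
  rw [Metric.continuousAt_iff]
  intro ε hε
  obtain ⟨δ, hδ, hH⟩ := H (ε / 2) (by linarith)
  refine ⟨δ, hδ, ?_⟩
  intro C hC
  have hle : dist (imap F hF C) (imap F hF C₀) ≤ ε / 2 := by
    apply dist_le_of_approx (by linarith)
    · rw [rset_imap, rset_imap]
      rintro _ ⟨x, hx, rfl⟩
      obtain ⟨y, hy, hxy⟩ := exists_close hx hC
      exact ⟨F C₀ y, Set.mem_image_of_mem _ hy, hH C hC x hx y hy hxy⟩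
    · rw [rset_imap, rset_imap]
      rintro _ ⟨y, hy, rfl⟩
      obtain ⟨x, hx, hxy⟩ := exists_close hy (by rw [dist_comm]; exact hC)
      refine ⟨F C x, Set.mem_image_of_mem _ hx, ?_⟩
      rw [abs_sub_comm]
      exact hH C hC x hx y hy (by rwa [abs_sub_comm])
  linarith

end SP

namespace SP
variable {n : ℕ}

/-- A pair of mutually inverse "nice" self-maps of `[0,1]`. -/
structure GoodFun (f g : ℝ → ℝ) : Prop where
  maps_f : MapsTo f (Icc (0:ℝ) 1) (Icc (0:ℝ) 1)
  maps_g : MapsTo g (Icc (0:ℝ) 1) (Icc (0:ℝ) 1)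
  inv_l : ∀ x ∈ Icc (0:ℝ) 1, g (f x) = x
  inv_r : ∀ x ∈ Icc (0:ℝ) 1, f (g x) = x
  cont_f : ContinuousOn f (Icc (0:ℝ) 1)
  cont_g : ContinuousOn g (Icc (0:ℝ) 1)

lemma GoodFun.symm {f g : ℝ → ℝ} (h : GoodFun f g) : GoodFun g f :=
  ⟨h.maps_g, h.maps_f, h.inv_r, h.inv_l, h.cont_g, h.cont_f⟩

lemma contOn_of_mono {f : ℝ → ℝ} (hm : StrictMonoOn f (Icc (0:ℝ) 1))
    (hmap : MapsTo f (Icc (0:ℝ) 1) (Icc (0:ℝ) 1))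
    (hsurj : SurjOn f (Icc (0:ℝ) 1) (Icc (0:ℝ) 1)) : ContinuousOn f (Icc (0:ℝ) 1) := by
  set F : Icc (0:ℝ) 1 → Icc (0:ℝ) 1 := hmap.restrict f _ _ with hF
  have hmono : StrictMono F := fun x y hxy => by
    have := hm x.2 y.2 (Subtype.coe_lt_coe.2 hxy)
    exact Subtype.mk_lt_mk.2 this
  have hsurjF : Function.Surjective F := by
    intro y
    obtain ⟨x, hx, hfx⟩ := hsurj y.2
    exact ⟨⟨x, hx⟩, Subtype.ext hfx⟩
  have hcont : Continuous F := by
    rw [(StrictMono.coe_orderIsoOfSurjective F hmono hsurjF).symm]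
    exact (StrictMono.orderIsoOfSurjective F hmono hsurjF).toHomeomorph.continuous
  rw [continuousOn_iff_continuous_restrict]
  exact continuous_subtype_val.comp hcont

lemma GoodFun.of_mono {f g : ℝ → ℝ} (hmf : StrictMonoOn f (Icc (0:ℝ) 1))
    (hmg : StrictMonoOn g (Icc (0:ℝ) 1))
    (maps_f : MapsTo f (Icc (0:ℝ) 1) (Icc (0:ℝ) 1))
    (maps_g : MapsTo g (Icc (0:ℝ) 1) (Icc (0:ℝ) 1))
    (inv_l : ∀ x ∈ Icc (0:ℝ) 1, g (f x) = x)
    (inv_r : ∀ x ∈ Icc (0:ℝ) 1, f (g x) = x) : GoodFun f g := by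
  have hsf : SurjOn f (Icc (0:ℝ) 1) (Icc (0:ℝ) 1) := fun y hy => ⟨g y, maps_g hy, inv_r y hy⟩
  have hsg : SurjOn g (Icc (0:ℝ) 1) (Icc (0:ℝ) 1) := fun y hy => ⟨f y, maps_f hy, inv_l y hy⟩
  exact ⟨maps_f, maps_g, inv_l, inv_r, contOn_of_mono hmf maps_f hsf, contOn_of_mono hmg maps_g hsg⟩

/-- Composition of good pairs. -/
lemma GoodFun.comp {f₁ g₁ f₂ g₂ : ℝ → ℝ} (h₁ : GoodFun f₁ g₁) (h₂ : GoodFun f₂ g₂) :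
    GoodFun (f₂ ∘ f₁) (g₁ ∘ g₂) := by
  refine ⟨h₂.maps_f.comp h₁.maps_f, h₁.maps_g.comp h₂.maps_g, ?_, ?_, ?_, ?_⟩
  · intro x hx
    show g₁ (g₂ (f₂ (f₁ x))) = x
    rw [h₂.inv_l _ (h₁.maps_f hx), h₁.inv_l _ hx]
  · intro x hx
    show f₂ (f₁ (g₁ (g₂ x))) = x
    rw [h₁.inv_r _ (h₂.maps_g hx), h₂.inv_r _ hx]
  · exact h₂.cont_f.comp h₁.cont_f h₁.maps_f
  · exact h₁.cont_g.comp h₂.cont_g h₂.maps_g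

lemma GoodFun.id : GoodFun (fun x : ℝ => x) (fun x : ℝ => x) :=
  ⟨mapsTo_id _, mapsTo_id _, fun x _ => rfl, fun x _ => rfl, continuousOn_id, continuousOn_id⟩

lemma GoodFun.refl : GoodFun (fun x : ℝ => 1 - x) (fun x : ℝ => 1 - x) := by
  have hm : MapsTo (fun x : ℝ => 1 - x) (Icc (0:ℝ) 1) (Icc (0:ℝ) 1) := by
    intro x hx; simp only [Set.mem_Icc] at *; constructor <;> linarith [hx.1, hx.2]
  exact ⟨hm, hm, fun x _ => by ring, fun x _ => by ring,
    (continuous_const.sub continuous_id).continuousOn,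
    (continuous_const.sub continuous_id).continuousOn⟩

/-- auxiliary mapsTo for image maps -/
lemma mapsTo_aux {f : ℝ → ℝ} (hf : MapsTo f (Icc (0:ℝ) 1) (Icc (0:ℝ) 1)) :
    ∀ C : SymmProd unitInterval n, MapsTo f (rset C) (Icc (0:ℝ) 1) :=
  fun C => hf.mono_left (rset_subset C)

lemma continuous_imap_const {f : ℝ → ℝ} (hmap : MapsTo f (Icc (0:ℝ) 1) (Icc (0:ℝ) 1))
    (hcont : ContinuousOn f (Icc (0:ℝ) 1)) :
    Continuous (imap (n := n) (fun _ => f) (mapsTo_aux hmap)) := by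
  rw [continuous_iff_continuousAt]
  intro C₀
  apply continuousAt_imap
  intro ε hε
  have huc : UniformContinuousOn f (Icc (0:ℝ) 1) :=
    (isCompact_Icc).uniformContinuousOn_of_continuous hcont
  rw [Metric.uniformContinuousOn_iff] at huc
  obtain ⟨δ, hδ, hd⟩ := huc ε hε
  refine ⟨δ, hδ, ?_⟩
  intro C _ x hx y hy hxy
  have := hd x (rset_subset C hx) y (rset_subset C₀ hy) (by rwa [Real.dist_eq])
  rw [Real.dist_eq] at this
  exact this.le

/-- The homeomorphism of the symmetric product induced by a good pair. -/
noncomputable def ihomeo {f g : ℝ → ℝ} (h : GoodFun f g) :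
    SymmProd unitInterval n ≃ₜ SymmProd unitInterval n where
  toFun := imap (fun _ => f) (mapsTo_aux h.maps_f)
  invFun := imap (fun _ => g) (mapsTo_aux h.maps_g)
  left_inv := by
    intro C
    apply rset_inj
    rw [rset_imap, rset_imap, Set.image_image]
    refine Eq.trans ?_ (Set.image_id _)
    apply Set.image_congr
    intro x hx
    exact h.inv_l x (rset_subset C hx)
  right_inv := by
    intro C
    apply rset_inj
    rw [rset_imap, rset_imap, Set.image_image]
    refine Eq.trans ?_ (Set.image_id _)
    apply Set.image_congr
    intro x hx
    exact h.inv_r x (rset_subset C hx)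
  continuous_toFun := continuous_imap_const h.maps_f h.cont_f
  continuous_invFun := continuous_imap_const h.maps_g h.cont_g

lemma ihomeo_apply {f g : ℝ → ℝ} (h : GoodFun f g) (C : SymmProd unitInterval n) :
    rset (ihomeo h C) = f '' rset C := rset_imap _ _ _

end SP

namespace SP

/-- Piecewise linear map of `[0,1]`: identity on `[0,a]`, sends `b ↦ c`, fixes `1`. -/
noncomputable def pl (a b c : ℝ) (x : ℝ) : ℝ :=
  if x ≤ a then x
  else if x ≤ b then a + (x - a) * ((c - a) / (b - a))
  else c + (x - b) * ((1 - c) / (1 - b))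

section pl
variable {a b c : ℝ} (ha : 0 ≤ a) (hab : a < b) (hb1 : b < 1) (hac : a < c) (hc1 : c < 1)

lemma pl_of_le {x : ℝ} (h : x ≤ a) : pl a b c x = x := if_pos h

lemma pl_of_mid {x : ℝ} (h1 : ¬ x ≤ a) (h2 : x ≤ b) :
    pl a b c x = a + (x - a) * ((c - a) / (b - a)) := by
  rw [pl, if_neg h1, if_pos h2]

lemma pl_of_gt {x : ℝ} (h1 : ¬ x ≤ a) (h2 : ¬ x ≤ b) :
    pl a b c x = c + (x - b) * ((1 - c) / (1 - b)) := by
  rw [pl, if_neg h1, if_neg h2]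

include hab hac in
lemma pl_mid : pl a b c b = c := by
  rw [pl_of_mid (not_le.2 hab) le_rfl, mul_comm, div_mul_cancel₀ _ (by linarith : b - a ≠ 0)]
  ring

include hab hb1 hac hc1 in
lemma pl_one : pl a b c 1 = 1 := by
  rw [pl_of_gt (not_le.2 (hab.trans hb1)) (not_le.2 hb1), mul_comm,
    div_mul_cancel₀ _ (by linarith : (1:ℝ) - b ≠ 0)]
  ring

include ha hab hb1 hac hc1 in
lemma pl_strictMono : StrictMono (pl a b c) := by
  have hs1 : (0:ℝ) < (c - a) / (b - a) := div_pos (by linarith) (by linarith)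
  have hk1 : (b - a) * ((c - a) / (b - a)) = c - a := by rw [mul_comm, div_mul_cancel₀ _ (by linarith : b - a ≠ 0)]
  have hs2 : (0:ℝ) < (1 - c) / (1 - b) := div_pos (by linarith) (by linarith)
  have hk2 : (1 - b) * ((1 - c) / (1 - b)) = 1 - c := by rw [mul_comm, div_mul_cancel₀ _ (by linarith : (1:ℝ) - b ≠ 0)]
  intro x y hxy
  rcases le_or_gt x a with h1 | h1
  · rw [pl_of_le h1]
    rcases le_or_gt y a with h2 | h2
    · rw [pl_of_le h2]; exact hxy
    · rcases le_or_gt y b with h3 | h3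
      · rw [pl_of_mid (not_le.2 h2) h3]
        nlinarith
      · rw [pl_of_gt (not_le.2 h2) (not_le.2 h3)]
        nlinarith
  · rcases le_or_gt x b with h2 | h2
    · rw [pl_of_mid (not_le.2 h1) h2]
      rcases le_or_gt y b with h3 | h3
      · rw [pl_of_mid (not_le.2 (h1.trans hxy)) h3]
        nlinarith
      · rw [pl_of_gt (not_le.2 (h1.trans hxy)) (not_le.2 h3)]
        have : a + (x - a) * ((c - a) / (b - a)) ≤ c := by nlinarith
        nlinarith
    · rw [pl_of_gt (not_le.2 h1) (not_le.2 h2),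
        pl_of_gt (not_le.2 (h1.trans hxy)) (not_le.2 (h2.trans hxy))]
      nlinarith

include ha hab hb1 hac hc1 in
lemma pl_mapsTo : MapsTo (pl a b c) (Icc (0:ℝ) 1) (Icc (0:ℝ) 1) := by
  have hs1 : (0:ℝ) < (c - a) / (b - a) := div_pos (by linarith) (by linarith)
  have hk1 : (b - a) * ((c - a) / (b - a)) = c - a := by rw [mul_comm, div_mul_cancel₀ _ (by linarith : b - a ≠ 0)]
  have hs2 : (0:ℝ) < (1 - c) / (1 - b) := div_pos (by linarith) (by linarith)
  have hk2 : (1 - b) * ((1 - c) / (1 - b)) = 1 - c := by rw [mul_comm, div_mul_cancel₀ _ (by linarith : (1:ℝ) - b ≠ 0)]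
  intro x hx
  obtain ⟨hx0, hx1⟩ := hx
  rcases le_or_gt x a with h1 | h1
  · rw [pl_of_le h1]; exact ⟨hx0, by linarith⟩
  · rcases le_or_gt x b with h2 | h2
    · rw [pl_of_mid (not_le.2 h1) h2]
      constructor
      · nlinarith
      · nlinarith
    · rw [pl_of_gt (not_le.2 h1) (not_le.2 h2)]
      constructor
      · nlinarith
      · nlinarith

include ha hab hb1 hac hc1 in
lemma pl_inv : ∀ x ∈ Icc (0:ℝ) 1, pl a c b (pl a b c x) = x := by
  have hba : b - a ≠ 0 := by linarith
  have hca : c - a ≠ 0 := by linarith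
  have hb1' : (1:ℝ) - b ≠ 0 := by linarith
  have hc1' : (1:ℝ) - c ≠ 0 := by linarith
  have hs1 : (0:ℝ) < (c - a) / (b - a) := div_pos (by linarith) (by linarith)
  have hs2 : (0:ℝ) < (1 - c) / (1 - b) := div_pos (by linarith) (by linarith)
  intro x _
  rcases le_or_gt x a with h1 | h1
  · rw [pl_of_le h1, pl_of_le h1]
  · rcases le_or_gt x b with h2 | h2
    · rw [pl_of_mid (not_le.2 h1) h2]
      have hy1 : ¬ a + (x - a) * ((c - a) / (b - a)) ≤ a := by nlinarith
      have hy2 : a + (x - a) * ((c - a) / (b - a)) ≤ c := by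
        have hk1 : (b - a) * ((c - a) / (b - a)) = c - a := by rw [mul_comm, div_mul_cancel₀ _ (by linarith : b - a ≠ 0)]
        nlinarith
      rw [pl_of_mid hy1 hy2]
      field_simp
      ring
    · rw [pl_of_gt (not_le.2 h1) (not_le.2 h2)]
      have hy1 : ¬ c + (x - b) * ((1 - c) / (1 - b)) ≤ a := by nlinarith
      have hy2 : ¬ c + (x - b) * ((1 - c) / (1 - b)) ≤ c := by nlinarith
      rw [pl_of_gt hy1 hy2]
      field_simp
      ring

include ha hab hb1 hac hc1 in
lemma pl_goodFun : GoodFun (pl a b c) (pl a c b) :=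
  GoodFun.of_mono ((pl_strictMono ha hab hb1 hac hc1).strictMonoOn _)
    ((pl_strictMono ha hac hc1 hab hb1).strictMonoOn _)
    (pl_mapsTo ha hab hb1 hac hc1) (pl_mapsTo ha hac hc1 hab hb1)
    (pl_inv ha hab hb1 hac hc1) (pl_inv ha hac hc1 hab hb1)

end pl

end SP

namespace SP

lemma GoodFun.map_zero {f g : ℝ → ℝ} (h : GoodFun f g) (hm : StrictMonoOn f (Icc (0:ℝ) 1)) :
    f 0 = 0 := by
  have h01 : (0:ℝ) ∈ Icc (0:ℝ) 1 := ⟨le_refl _, zero_le_one⟩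
  have hg0 : g 0 ∈ Icc (0:ℝ) 1 := h.maps_g h01
  have hfg : f (g 0) = 0 := h.inv_r 0 h01
  have h1 : f 0 ≤ f (g 0) := hm.monotoneOn h01 hg0 hg0.1
  have h2 : (0:ℝ) ≤ f 0 := (h.maps_f h01).1
  rw [hfg] at h1
  linarith

lemma GoodFun.map_one {f g : ℝ → ℝ} (h : GoodFun f g) (hm : StrictMonoOn f (Icc (0:ℝ) 1)) :
    f 1 = 1 := by
  have h01 : (1:ℝ) ∈ Icc (0:ℝ) 1 := ⟨zero_le_one, le_refl _⟩
  have hg1 : g 1 ∈ Icc (0:ℝ) 1 := h.maps_g h01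
  have hfg : f (g 1) = 1 := h.inv_r 1 h01
  have h1 : f (g 1) ≤ f 1 := hm.monotoneOn hg1 h01 hg1.2
  have h2 : f 1 ≤ 1 := (h.maps_f h01).2
  rw [hfg] at h1
  linarith

/-- Monotone interpolation: a good pair carrying `P` onto `Q`. -/
lemma interp (k : ℕ) : ∀ P Q : Finset ℝ, P.card = k → Q.card = k →
    ↑P ⊆ Icc (0:ℝ) 1 → ↑Q ⊆ Icc (0:ℝ) 1 →
    (0:ℝ) ∈ P → (1:ℝ) ∈ P → (0:ℝ) ∈ Q → (1:ℝ) ∈ Q →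
    ∃ f g : ℝ → ℝ, GoodFun f g ∧ StrictMonoOn f (Icc (0:ℝ) 1) ∧ f '' ↑P = ↑Q := by
  induction k using Nat.strong_induction_on with
  | _ k IH =>
    intro P Q hPk hQk hPsub hQsub hP0 hP1 hQ0 hQ1
    have h01ne : (0:ℝ) ≠ 1 := by norm_num
    have h01P : ({0,1} : Finset ℝ) ⊆ P :=
      Finset.insert_subset hP0 (Finset.singleton_subset_iff.2 hP1)
    have h01Q : ({0,1} : Finset ℝ) ⊆ Q :=
      Finset.insert_subset hQ0 (Finset.singleton_subset_iff.2 hQ1)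
    have hcard01 : ({0,1} : Finset ℝ).card = 2 := by
      rw [Finset.card_insert_of_notMem (by simp [h01ne]), Finset.card_singleton]
    by_cases hne : (P \ {0,1} : Finset ℝ).Nonempty
    · -- there is an interior point
      set Pint := (P \ {0,1} : Finset ℝ) with hPint
      set Qint := (Q \ {0,1} : Finset ℝ) with hQint
      have hPintcard : Pint.card = k - 2 := by rw [hPint, Finset.card_sdiff_of_subset h01P, hPk, hcard01]
      have hQintcard : Qint.card = k - 2 := by rw [hQint, Finset.card_sdiff_of_subset h01Q, hQk, hcard01]
      have hQne : Qint.Nonempty := by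
        rw [← Finset.card_pos, hQintcard, ← hPintcard]
        exact Finset.card_pos.2 hne
      set pstar := Pint.max' hne with hpstar
      set qstar := Qint.max' hQne with hqstar
      have hpsP : pstar ∈ P := (Finset.mem_sdiff.1 (Pint.max'_mem hne)).1
      have hps01 : pstar ∉ ({0,1} : Finset ℝ) := (Finset.mem_sdiff.1 (Pint.max'_mem hne)).2
      have hqsQ : qstar ∈ Q := (Finset.mem_sdiff.1 (Qint.max'_mem hQne)).1
      have hqs01 : qstar ∉ ({0,1} : Finset ℝ) := (Finset.mem_sdiff.1 (Qint.max'_mem hQne)).2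
      have hps0 : pstar ≠ 0 := by intro h; exact hps01 (by simp [h])
      have hps1 : pstar ≠ 1 := by intro h; exact hps01 (by simp [h])
      have hqs0 : qstar ≠ 0 := by intro h; exact hqs01 (by simp [h])
      have hqs1 : qstar ≠ 1 := by intro h; exact hqs01 (by simp [h])
      have hpsI : pstar ∈ Icc (0:ℝ) 1 := hPsub hpsP
      have hqsI : qstar ∈ Icc (0:ℝ) 1 := hQsub hqsQ
      have hpspos : 0 < pstar := lt_of_le_of_ne hpsI.1 (Ne.symm hps0)
      have hpslt1 : pstar < 1 := lt_of_le_of_ne hpsI.2 hps1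
      have hqspos : 0 < qstar := lt_of_le_of_ne hqsI.1 (Ne.symm hqs0)
      have hqslt1 : qstar < 1 := lt_of_le_of_ne hqsI.2 hqs1
      set Pm := P.erase pstar with hPm
      set Qm := Q.erase qstar with hQm
      have hPmcard : Pm.card = k - 1 := by rw [hPm, Finset.card_erase_of_mem hpsP, hPk]
      have hQmcard : Qm.card = k - 1 := by rw [hQm, Finset.card_erase_of_mem hqsQ, hQk]
      have hkpos : 0 < k := by
        have := Finset.card_pos.2 hne
        omega
      obtain ⟨fm, gm, hgood, hmono, himg⟩ :=
        IH (k - 1) (by omega) Pm Qm hPmcard hQmcard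
          ((Finset.coe_subset.2 (Finset.erase_subset _ _)).trans hPsub)
          ((Finset.coe_subset.2 (Finset.erase_subset _ _)).trans hQsub)
          (Finset.mem_erase.2 ⟨Ne.symm hps0, hP0⟩) (Finset.mem_erase.2 ⟨Ne.symm hps1, hP1⟩)
          (Finset.mem_erase.2 ⟨Ne.symm hqs0, hQ0⟩) (Finset.mem_erase.2 ⟨Ne.symm hqs1, hQ1⟩)
      have hf0 : fm 0 = 0 := hgood.map_zero hmono
      have hf1 : fm 1 = 1 := hgood.map_one hmono
      -- the second largest point of Qm below 1
      have hQm0 : (0:ℝ) ∈ Qm.erase 1 :=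
        Finset.mem_erase.2 ⟨h01ne, Finset.mem_erase.2 ⟨Ne.symm hqs0, hQ0⟩⟩
      have hQmne : (Qm.erase 1).Nonempty := ⟨0, hQm0⟩
      set q₂ := (Qm.erase 1).max' hQmne with hq₂
      have hq₂mem : q₂ ∈ Qm.erase 1 := (Qm.erase 1).max'_mem hQmne
      have hq₂Qm : q₂ ∈ Qm := (Finset.mem_erase.1 hq₂mem).2
      have hq₂Q : q₂ ∈ Q := Finset.erase_subset _ _ hq₂Qm
      have hq₂ne1 : q₂ ≠ 1 := (Finset.mem_erase.1 hq₂mem).1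
      have hq₂neqs : q₂ ≠ qstar := (Finset.mem_erase.1 hq₂Qm).1
      have hq₂I : q₂ ∈ Icc (0:ℝ) 1 := hQsub hq₂Q
      have hq₂0 : 0 ≤ q₂ := hq₂I.1
      have hq₂lt1 : q₂ < 1 := lt_of_le_of_ne hq₂I.2 hq₂ne1
      have hq₂qs : q₂ < qstar := by
        rcases eq_or_ne q₂ 0 with h | h
        · rw [h]; exact hqspos
        · have : q₂ ∈ Qint := Finset.mem_sdiff.2 ⟨hq₂Q, by simp [h, hq₂ne1]⟩
          exact lt_of_le_of_ne (Qint.le_max' _ this) hq₂neqs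
      set r := fm pstar with hr
      have hrI : r ∈ Icc (0:ℝ) 1 := hgood.maps_f hpsI
      have hrlt1 : r < 1 := by
        have := hmono hpsI ⟨zero_le_one, le_refl _⟩ hpslt1
        rwa [hf1] at this
      have hq₂r : q₂ < r := by
        have : q₂ ∈ fm '' ↑Pm := by rw [himg]; exact_mod_cast hq₂Qm
        obtain ⟨x, hxPm, hfx⟩ := this
        have hxPm' : x ∈ Pm := by exact_mod_cast hxPm
        have hxP : x ∈ P := Finset.erase_subset _ _ hxPm'
        have hxI : x ∈ Icc (0:ℝ) 1 := hPsub hxP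
        have hxne1 : x ≠ 1 := by
          intro h; rw [h, hf1] at hfx; exact hq₂ne1 hfx.symm
        have hxps : x < pstar := by
          rcases eq_or_ne x 0 with h0 | h0
          · rw [h0]; exact hpspos
          · have : x ∈ Pint := Finset.mem_sdiff.2 ⟨hxP, by simp [h0, hxne1]⟩
            exact lt_of_le_of_ne (Pint.le_max' _ this) (Finset.mem_erase.1 hxPm').1
        have := hmono hxI hpsI hxps
        rwa [hfx] at this
      -- the corrector
      have hegood : GoodFun (pl q₂ r qstar) (pl q₂ qstar r) :=
        pl_goodFun hq₂0 hq₂r hrlt1 hq₂qs hqslt1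
      have hemono : StrictMono (pl q₂ r qstar) := pl_strictMono hq₂0 hq₂r hrlt1 hq₂qs hqslt1
      refine ⟨pl q₂ r qstar ∘ fm, gm ∘ pl q₂ qstar r, hgood.comp hegood, ?_, ?_⟩
      · intro x hx y hy hxy
        exact hemono (hmono hx hy hxy)
      · have hPins : (P : Set ℝ) = insert pstar ↑Pm := by
          rw [hPm, ← Finset.coe_insert, Finset.insert_erase hpsP]
        have hQins : (Q : Set ℝ) = insert qstar ↑Qm := by
          rw [hQm, ← Finset.coe_insert, Finset.insert_erase hqsQ]
        rw [hPins, hQins, Set.image_insert_eq]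
        have h1 : (pl q₂ r qstar ∘ fm) pstar = qstar := by
          show pl q₂ r qstar (fm pstar) = qstar
          rw [← hr]
          exact pl_mid hq₂r hq₂qs
        rw [h1]
        congr 1
        rw [Set.image_comp, himg]
        refine Eq.trans ?_ (Set.image_id _)
        apply Set.image_congr
        intro y hy
        have hyQm : y ∈ Qm := by exact_mod_cast hy
        rcases eq_or_ne y 1 with rfl | hyne1
        · exact pl_one hq₂r hrlt1 hq₂qs hqslt1
        · have : y ≤ q₂ := (Qm.erase 1).le_max' y (Finset.mem_erase.2 ⟨hyne1, hyQm⟩)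
          exact pl_of_le this
    · -- no interior points: P = Q = {0,1}
      have hPeq : P = ({0,1} : Finset ℝ) := by
        have hsub : P ⊆ ({0,1} : Finset ℝ) := by
          intro x hx
          by_contra hc
          exact hne ⟨x, Finset.mem_sdiff.2 ⟨hx, hc⟩⟩
        exact Finset.Subset.antisymm hsub h01P
      have hQeq : Q = ({0,1} : Finset ℝ) := by
        apply (Finset.eq_of_subset_of_card_le h01Q ?_).symm
        rw [hQk, ← hPk, hPeq]
      refine ⟨fun x => x, fun x => x, GoodFun.id, fun x _ y _ h => h, ?_⟩
      rw [hPeq, hQeq, Set.image_id']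
  
end SP

namespace SP

/-- A strictly monotone homeomorphism pair of `[0,2]` (given globally). -/
structure PsiPair (ψ ψ' : ℝ → ℝ) : Prop where
  mono : StrictMono ψ
  cont : Continuous ψ
  cont' : Continuous ψ'
  zero : ψ 0 = 0
  two : ψ 2 = 2
  inv_l : ∀ s, ψ' (ψ s) = s
  inv_r : ∀ s, ψ (ψ' s) = s

lemma PsiPair.mono' {ψ ψ' : ℝ → ℝ} (hp : PsiPair ψ ψ') : StrictMono ψ' := by
  intro x y hxy
  rcases lt_trichotomy (ψ' x) (ψ' y) with h | h | h
  · exact h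
  · exfalso; have := congrArg ψ h; rw [hp.inv_r, hp.inv_r] at this; exact hxy.ne this
  · exfalso; have := hp.mono h; rw [hp.inv_r, hp.inv_r] at this; linarith

lemma PsiPair.symm {ψ ψ' : ℝ → ℝ} (hp : PsiPair ψ ψ') : PsiPair ψ' ψ := by
  refine ⟨hp.mono', hp.cont', hp.cont, ?_, ?_, hp.inv_r, hp.inv_l⟩
  · have := hp.inv_l 0; rwa [hp.zero] at this
  · have := hp.inv_l 2; rwa [hp.two] at this

section real
variable {ψ ψ' : ℝ → ℝ}

lemma PsiPair.mem02 (hp : PsiPair ψ ψ') {s : ℝ} (h0 : 0 ≤ s) (h2 : s ≤ 2) :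
    0 ≤ ψ s ∧ ψ s ≤ 2 := by
  constructor
  · have := hp.mono.monotone h0; rwa [hp.zero] at this
  · have := hp.mono.monotone h2; rwa [hp.two] at this

lemma PsiPair.interior (hp : PsiPair ψ ψ') {s : ℝ} (h0 : 0 < s) (h2 : s < 2) :
    0 < ψ s ∧ ψ s < 2 := by
  constructor
  · have := hp.mono h0; rwa [hp.zero] at this
  · have := hp.mono h2; rwa [hp.two] at this

/-- Length of the fiber `{m + M = s}` in the triangle `0 ≤ m ≤ M ≤ 1`. -/
noncomputable def ell (s : ℝ) : ℝ := min s (2 - s)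

lemma continuous_ell : Continuous ell :=
  continuous_id.min (continuous_const.sub continuous_id)

lemma ell_nonneg {s : ℝ} (h0 : 0 ≤ s) (h2 : s ≤ 2) : 0 ≤ ell s :=
  le_min h0 (by linarith)

lemma ell_pos {s : ℝ} (h0 : 0 < s) (h2 : s < 2) : 0 < ell s :=
  lt_min h0 (by linarith)

lemma ell_le_self (s : ℝ) : ell s ≤ s := min_le_left _ _
lemma ell_le_two_sub (s : ℝ) : ell s ≤ 2 - s := min_le_right _ _

/-- New fiber position length. -/
noncomputable def dd (ψ : ℝ → ℝ) (m M : ℝ) : ℝ := (M - m) * ell (ψ (m + M)) / ell (m + M)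
/-- New minimum. -/
noncomputable def sm (ψ : ℝ → ℝ) (m M : ℝ) : ℝ := (ψ (m + M) - dd ψ m M) / 2
/-- New maximum. -/
noncomputable def sM (ψ : ℝ → ℝ) (m M : ℝ) : ℝ := (ψ (m + M) + dd ψ m M) / 2
/-- The point transformation. -/
noncomputable def trf (ψ : ℝ → ℝ) (m M x : ℝ) : ℝ :=
  sm ψ m M + (sM ψ m M - sm ψ m M) * (x - m) / (M - m)

lemma sm_add_sM (m M : ℝ) : sm ψ m M + sM ψ m M = ψ (m + M) := by
  unfold sm sM; ring

lemma sM_sub_sm (m M : ℝ) : sM ψ m M - sm ψ m M = dd ψ m M := by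
  unfold sm sM; ring

lemma dd_self (c : ℝ) : dd ψ c c = 0 := by
  unfold dd; rw [sub_self, zero_mul, zero_div]

lemma sm_self (c : ℝ) : sm ψ c c = ψ (c + c) / 2 := by
  unfold sm; rw [dd_self, sub_zero]

lemma sM_self (c : ℝ) : sM ψ c c = ψ (c + c) / 2 := by
  unfold sM; rw [dd_self, add_zero]

variable (hp : PsiPair ψ ψ')

section bounds
variable {m M : ℝ} (h0 : 0 ≤ m) (hmM : m ≤ M) (h1 : M ≤ 1)

include hp h0 hmM h1 in
lemma dd_nonneg : 0 ≤ dd ψ m M := by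
  have h1' := hp.mem02 (by linarith : (0:ℝ) ≤ m + M) (by linarith : m + M ≤ 2)
  exact div_nonneg (mul_nonneg (by linarith) (ell_nonneg h1'.1 h1'.2))
    (ell_nonneg (by linarith) (by linarith))

include hp h0 hmM h1 in
lemma dd_le : dd ψ m M ≤ ell (ψ (m + M)) := by
  have h1' := hp.mem02 (by linarith : (0:ℝ) ≤ m + M) (by linarith : m + M ≤ 2)
  have hell' : 0 ≤ ell (ψ (m + M)) := ell_nonneg h1'.1 h1'.2
  rcases eq_or_lt_of_le hmM with heq | hlt
  · subst heq; rw [dd_self]; exact hell'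
  · have hs0 : 0 < m + M := by linarith
    have hs2 : m + M < 2 := by linarith
    have hells : 0 < ell (m + M) := ell_pos hs0 hs2
    rw [dd, div_le_iff₀ hells]
    have hdle : M - m ≤ ell (m + M) := le_min (by linarith) (by linarith)
    nlinarith

include hp h0 hmM h1 in
lemma dd_pos (hlt : m < M) : 0 < dd ψ m M := by
  have hs0 : 0 < m + M := by linarith
  have hs2 : m + M < 2 := by linarith
  have hi := hp.interior hs0 hs2
  exact div_pos (mul_pos (by linarith) (ell_pos hi.1 hi.2)) (ell_pos hs0 hs2)

include hp h0 hmM h1 in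
lemma sm_nonneg : 0 ≤ sm ψ m M := by
  have := dd_le hp h0 hmM h1
  have h2 := ell_le_self (ψ (m + M))
  unfold sm; linarith

include hp h0 hmM h1 in
lemma sM_le_one : sM ψ m M ≤ 1 := by
  have := dd_le hp h0 hmM h1
  have h2 := ell_le_two_sub (ψ (m + M))
  unfold sM; linarith

include hp h0 hmM h1 in
lemma sm_le_sM : sm ψ m M ≤ sM ψ m M := by
  have := dd_nonneg hp h0 hmM h1
  unfold sm sM; linarith

include hp h0 hmM h1 in
lemma trf_mem {x : ℝ} (hxm : m ≤ x) (hxM : x ≤ M) :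
    trf ψ m M x ∈ Icc (sm ψ m M) (sM ψ m M) := by
  rcases eq_or_lt_of_le hmM with heq | hlt
  · subst heq
    have hx : x = m := le_antisymm hxM hxm
    subst hx
    rw [trf, sub_self, mul_zero, zero_div, add_zero]
    exact ⟨le_refl _, sm_le_sM hp h0 (le_refl _) h1⟩
  · have hd : 0 < M - m := by linarith
    have hdd := dd_nonneg hp h0 hmM h1
    have ht0 : 0 ≤ (x - m) / (M - m) := div_nonneg (by linarith) hd.le
    have ht1 : (x - m) / (M - m) ≤ 1 := (div_le_one hd).2 (by linarith)
    rw [trf, mul_div_assoc]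
    have hs := sM_sub_sm (ψ := ψ) m M
    constructor
    · nlinarith
    · nlinarith

lemma trf_left : trf ψ m M m = sm ψ m M := by
  rw [trf, sub_self, mul_zero, zero_div, add_zero]

include hmM in
lemma trf_right : trf ψ m M M = sM ψ m M := by
  rcases eq_or_lt_of_le hmM with heq | hlt
  · subst heq
    rw [trf, sub_self, mul_zero, zero_div, add_zero, sm_self, sM_self]
  · rw [trf, mul_div_assoc, div_self (by linarith : M - m ≠ 0), mul_one]
    rw [sM_sub_sm]; unfold sm sM; ring

include hp h0 hmM h1 in
lemma trf_inv {x : ℝ} (hxm : m ≤ x) (hxM : x ≤ M) :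
    trf ψ' (sm ψ m M) (sM ψ m M) (trf ψ m M x) = x := by
  have hsum := sm_add_sM (ψ := ψ) m M
  rcases eq_or_lt_of_le hmM with heq | hlt
  · subst heq
    have hx : x = m := le_antisymm hxM hxm
    subst hx
    rw [trf_left, sm_self, sM_self, trf_left, sm_self]
    rw [add_halves, hp.inv_l]
    linarith
  · have hd : 0 < M - m := by linarith
    have hs0 : 0 < m + M := by linarith
    have hs2 : m + M < 2 := by linarith
    have hi := hp.interior hs0 hs2
    have hells : 0 < ell (m + M) := ell_pos hs0 hs2
    have hells' : 0 < ell (ψ (m + M)) := ell_pos hi.1 hi.2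
    have hd' : 0 < dd ψ m M := dd_pos hp h0 hmM h1 hlt
    -- data of the reverse transform
    have hsum2 : sm ψ m M + sM ψ m M = ψ (m + M) := hsum
    have hdd2 : dd ψ' (sm ψ m M) (sM ψ m M) = M - m := by
      rw [dd, hsum2, hp.inv_l, sM_sub_sm, dd]
      field_simp
    have hsm2 : sm ψ' (sm ψ m M) (sM ψ m M) = m := by
      rw [sm, hsum2, hp.inv_l, hdd2]; ring
    have hsM2 : sM ψ' (sm ψ m M) (sM ψ m M) = M := by
      rw [sM, hsum2, hp.inv_l, hdd2]; ring
    unfold trf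
    rw [hsm2, hsM2, sM_sub_sm]
    field_simp
    ring

end bounds

end real

end SP

namespace SP

section phimap
variable {n : ℕ} {ψ ψ' : ℝ → ℝ} (hp : PsiPair ψ ψ')

include hp in
lemma trf_mapsTo :
    ∀ C : SymmProd unitInterval n, MapsTo (fun x => trf ψ (mn C) (mx C) x) (rset C)
      (Icc (0:ℝ) 1) := by
  intro C x hx
  have h0 := mn_nonneg C
  have h1 := mx_le_one C
  have hmM := mn_le_mx C
  have hmem := trf_mem hp h0 hmM h1 (mn_le hx) (le_mx hx)
  exact ⟨le_trans (sm_nonneg hp h0 hmM h1) hmem.1, le_trans hmem.2 (sM_le_one hp h0 hmM h1)⟩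

noncomputable def phiMap : SymmProd unitInterval n → SymmProd unitInterval n :=
  imap (fun C x => trf ψ (mn C) (mx C) x) (trf_mapsTo hp)

lemma rset_phiMap (C : SymmProd unitInterval n) :
    rset (phiMap hp C) = (fun x => trf ψ (mn C) (mx C) x) '' rset C := rset_imap _ _ _

lemma mn_phiMap (C : SymmProd unitInterval n) : mn (phiMap hp C) = sm ψ (mn C) (mx C) := by
  apply le_antisymm
  · apply mn_le
    rw [rset_phiMap]
    exact ⟨mn C, mn_mem C, trf_left⟩
  · have h := mn_mem (phiMap hp C)
    rw [rset_phiMap hp] at h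
    obtain ⟨x, hx, heq⟩ := h
    rw [← heq]
    exact (trf_mem hp (mn_nonneg C) (mn_le_mx C) (mx_le_one C) (mn_le hx) (le_mx hx)).1

lemma mx_phiMap (C : SymmProd unitInterval n) : mx (phiMap hp C) = sM ψ (mn C) (mx C) := by
  apply le_antisymm
  · have h := mx_mem (phiMap hp C)
    rw [rset_phiMap hp] at h
    obtain ⟨x, hx, heq⟩ := h
    rw [← heq]
    exact (trf_mem hp (mn_nonneg C) (mn_le_mx C) (mx_le_one C) (mn_le hx) (le_mx hx)).2
  · apply le_mx
    rw [rset_phiMap]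
    exact ⟨mx C, mx_mem C, trf_right (mn_le_mx C)⟩

lemma phiMap_inv (C : SymmProd unitInterval n) : phiMap hp.symm (phiMap hp C) = C := by
  apply rset_inj
  rw [rset_phiMap, rset_phiMap, mn_phiMap, mx_phiMap, Set.image_image]
  refine Eq.trans ?_ (Set.image_id _)
  apply Set.image_congr
  intro x hx
  exact trf_inv hp (mn_nonneg C) (mn_le_mx C) (mx_le_one C) (mn_le hx) (le_mx hx)

include hp in
/-- Two-sided closeness of `sm`/`sM` to the degenerate value near a singleton. -/
lemma sm_sM_close {c : ℝ} (hc : c ∈ Icc (0:ℝ) 1) {ε : ℝ} (hε : 0 < ε) :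
    ∃ δ > (0:ℝ), ∀ m M, 0 ≤ m → m ≤ M → M ≤ 1 → |m - c| < δ → |M - c| < δ →
      ψ (c + c) / 2 - ε ≤ sm ψ m M ∧ sM ψ m M ≤ ψ (c + c) / 2 + ε := by
  rcases eq_or_lt_of_le hc.1 with hc0 | hc0
  · -- c = 0
    have hc0' : c = 0 := hc0.symm
    subst hc0'
    have h00 : ψ (0 + 0) / 2 = 0 := by rw [add_zero, hp.zero]; norm_num
    have hψc : ContinuousAt ψ 0 := hp.cont.continuousAt
    rw [Metric.continuousAt_iff] at hψc
    obtain ⟨δ₂, hδ₂, hd⟩ := hψc ε hε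
    refine ⟨δ₂ / 2, by linarith, ?_⟩
    intro m M h0 hmM h1 hm hM
    have hMlt : M < δ₂ / 2 := by
      have := abs_lt.1 hM; linarith [this.2]
    have hs : |m + M - 0| < δ₂ := by
      rw [sub_zero, abs_of_nonneg (by linarith)]
      linarith
    have hψs := hd (by rwa [Real.dist_eq])
    rw [Real.dist_eq, hp.zero, sub_zero] at hψs
    have hψs' : ψ (m + M) < ε := lt_of_abs_lt hψs
    have hsm := sm_nonneg hp h0 hmM h1
    have hdd := dd_le hp h0 hmM h1
    have hel := ell_le_self (ψ (m + M))
    rw [h00]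
    constructor
    · linarith
    · unfold sM; linarith
  · rcases eq_or_lt_of_le hc.2 with hc1 | hc1
    · -- c = 1
      subst hc1
      have h22 : ψ (1 + 1) / 2 = 1 := by norm_num [hp.two]
      have hψc : ContinuousAt ψ 2 := hp.cont.continuousAt
      rw [Metric.continuousAt_iff] at hψc
      obtain ⟨δ₂, hδ₂, hd⟩ := hψc ε hε
      refine ⟨δ₂ / 2, by linarith, ?_⟩
      intro m M h0 hmM h1 hm hM
      have hmgt : 1 - δ₂ / 2 < m := by
        have := abs_lt.1 hm; linarith [this.1]
      have hs : |m + M - 2| < δ₂ := by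
        rw [abs_lt]
        constructor <;> linarith [abs_lt.1 hM]
      have hψs := hd (by rwa [Real.dist_eq])
      rw [Real.dist_eq, hp.two] at hψs
      have hψs' : 2 - ε < ψ (m + M) := by
        have := abs_lt.1 hψs; linarith [this.1]
      have hsM := sM_le_one hp h0 hmM h1
      have hdd := dd_le hp h0 hmM h1
      have hel := ell_le_two_sub (ψ (m + M))
      have hsm := sm_le_sM hp h0 hmM h1
      rw [h22]
      constructor
      · unfold sm; linarith
      · linarith
    · -- 0 < c < 1
      have hell : ell (c + c) ≠ 0 := (ell_pos (by linarith) (by linarith)).ne'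
      have hsmc : ContinuousAt (fun q : ℝ × ℝ => sm ψ q.1 q.2) (c, c) := by
        unfold sm dd
        apply ContinuousAt.div_const
        apply ContinuousAt.sub
        · exact (hp.cont.continuousAt).comp (continuous_fst.add continuous_snd).continuousAt
        · apply ContinuousAt.div
          · apply ContinuousAt.mul
            · exact (continuous_snd.sub continuous_fst).continuousAt
            · exact (continuous_ell.continuousAt).comp
                ((hp.cont.continuousAt).comp (continuous_fst.add continuous_snd).continuousAt)
          · exact (continuous_ell.continuousAt).comp (continuous_fst.add continuous_snd).continuousAt
          · exact hell
      have hsMc : ContinuousAt (fun q : ℝ × ℝ => sM ψ q.1 q.2) (c, c) := by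
        unfold sM dd
        apply ContinuousAt.div_const
        apply ContinuousAt.add
        · exact (hp.cont.continuousAt).comp (continuous_fst.add continuous_snd).continuousAt
        · apply ContinuousAt.div
          · apply ContinuousAt.mul
            · exact (continuous_snd.sub continuous_fst).continuousAt
            · exact (continuous_ell.continuousAt).comp
                ((hp.cont.continuousAt).comp (continuous_fst.add continuous_snd).continuousAt)
          · exact (continuous_ell.continuousAt).comp (continuous_fst.add continuous_snd).continuousAt
          · exact hell
      rw [Metric.continuousAt_iff] at hsmc hsMc
      obtain ⟨δ₁, hδ₁, hd₁⟩ := hsmc ε hε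
      obtain ⟨δ₃, hδ₃, hd₃⟩ := hsMc ε hε
      refine ⟨min δ₁ δ₃, lt_min hδ₁ hδ₃, ?_⟩
      intro m M h0 hmM h1 hm hM
      have hq₁ : dist ((m, M) : ℝ × ℝ) (c, c) < δ₁ := by
        rw [Prod.dist_eq]
        apply max_lt
        · rw [Real.dist_eq]; exact lt_of_lt_of_le hm (le_trans (min_le_left _ _) le_rfl)
        · rw [Real.dist_eq]; exact lt_of_lt_of_le hM (min_le_left _ _)
      have hq₃ : dist ((m, M) : ℝ × ℝ) (c, c) < δ₃ := by
        rw [Prod.dist_eq]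
        apply max_lt
        · rw [Real.dist_eq]; exact lt_of_lt_of_le hm (min_le_right _ _)
        · rw [Real.dist_eq]; exact lt_of_lt_of_le hM (min_le_right _ _)
      have e₁ := hd₁ hq₁
      have e₃ := hd₃ hq₃
      rw [Real.dist_eq] at e₁ e₃
      have v₁ : sm ψ c c = ψ (c + c) / 2 := sm_self c
      have v₃ : sM ψ c c = ψ (c + c) / 2 := sM_self c
      rw [v₁] at e₁
      rw [v₃] at e₃
      constructor
      · have := abs_lt.1 e₁; linarith [this.1]
      · have := abs_lt.1 e₃; linarith [this.2]

end phimap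

end SP

namespace SP

section phicont
variable {n : ℕ} {ψ ψ' : ℝ → ℝ} (hp : PsiPair ψ ψ')

include hp in
lemma continuous_phiMap : Continuous (phiMap (n := n) hp) := by
  rw [continuous_iff_continuousAt]
  intro C₀
  rcases eq_or_lt_of_le (mn_le_mx C₀) with heq | hlt
  · -- singleton case: mn C₀ = mx C₀
    have hcI : mn C₀ ∈ Icc (0:ℝ) 1 := ⟨mn_nonneg C₀, heq.le.trans (mx_le_one C₀)⟩
    rw [Metric.continuousAt_iff]
    intro ε hε
    obtain ⟨δ, hδ, hd⟩ := sm_sM_close hp hcI (show (0:ℝ) < ε / 3 by linarith)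
    refine ⟨δ, hδ, ?_⟩
    intro C hC
    have hmn : |mn C - mn C₀| < δ := lt_of_le_of_lt (abs_mn_sub_le C C₀) hC
    have hmx : |mx C - mn C₀| < δ := by
      have h := abs_mx_sub_le C C₀
      rw [← heq] at h
      exact lt_of_le_of_lt h hC
    obtain ⟨hl, hr⟩ := hd (mn C) (mx C) (mn_nonneg C) (mn_le_mx C) (mx_le_one C) hmn hmx
    have hsub1 : rset (phiMap hp C) ⊆
        Icc (ψ (mn C₀ + mn C₀) / 2 - ε/3) (ψ (mn C₀ + mn C₀) / 2 + ε/3) := by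
      rw [rset_phiMap]
      rintro _ ⟨x, hx, rfl⟩
      have hm := trf_mem hp (mn_nonneg C) (mn_le_mx C) (mx_le_one C) (mn_le hx) (le_mx hx)
      exact ⟨le_trans (by linarith) hm.1, le_trans hm.2 (by linarith)⟩
    have hsub2 : rset (phiMap hp C₀) ⊆
        Icc (ψ (mn C₀ + mn C₀) / 2 - ε/3) (ψ (mn C₀ + mn C₀) / 2 + ε/3) := by
      rw [rset_phiMap]
      rintro _ ⟨x, hx, rfl⟩
      have hxc : x = mn C₀ := le_antisymm (heq ▸ le_mx hx) (mn_le hx)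
      have hval : trf ψ (mn C₀) (mx C₀) x = ψ (mn C₀ + mn C₀) / 2 := by
        rw [hxc, ← heq, trf_left, sm_self]
      simp only [hval]
      constructor <;> linarith
    have hfin := dist_le_of_subset_Icc
      (by linarith : ψ (mn C₀ + mn C₀) / 2 - ε/3 ≤ ψ (mn C₀ + mn C₀) / 2 + ε/3) hsub1 hsub2
    calc dist (phiMap hp C) (phiMap hp C₀)
        ≤ (ψ (mn C₀ + mn C₀) / 2 + ε/3) - (ψ (mn C₀ + mn C₀) / 2 - ε/3) := hfin
      _ < ε := by linarith
  · -- nondegenerate case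
    set m₀ := mn C₀ with hm₀
    set M₀ := mx C₀ with hM₀
    have h00 : 0 ≤ m₀ := mn_nonneg C₀
    have h11 : M₀ ≤ 1 := mx_le_one C₀
    have hs₀0 : 0 < m₀ + M₀ := by linarith
    have hs₀2 : m₀ + M₀ < 2 := by linarith
    set η := min ((M₀ - m₀)/4) (min ((m₀ + M₀)/4) ((2 - (m₀ + M₀))/4)) with hη
    have hηpos : 0 < η := by
      apply lt_min (by linarith)
      exact lt_min (by linarith) (by linarith)
    have hη1 : η ≤ (M₀ - m₀)/4 := min_le_left _ _
    have hη2 : η ≤ (m₀ + M₀)/4 := le_trans (min_le_right _ _) (min_le_left _ _)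
    have hη3 : η ≤ (2 - (m₀ + M₀))/4 := le_trans (min_le_right _ _) (min_le_right _ _)
    set U : Set (ℝ × ℝ × ℝ) :=
      Icc (m₀ - η) (m₀ + η) ×ˢ (Icc (M₀ - η) (M₀ + η) ×ˢ Icc (0:ℝ) 1) with hU
    have hUc : IsCompact U := isCompact_Icc.prod (isCompact_Icc.prod isCompact_Icc)
    have hmem : ∀ p ∈ U, (0:ℝ) < p.2.1 - p.1 ∧ ell (p.1 + p.2.1) ≠ 0 := by
      rintro ⟨m, M, x⟩ ⟨hm, hM, hx⟩
      simp only [Set.mem_Icc] at hm hM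
      constructor
      · simp only; linarith [hm.2, hM.1]
      · simp only
        apply ne_of_gt
        apply ell_pos
        · linarith [hm.1, hM.1]
        · linarith [hm.2, hM.2]
    have c1 : ContinuousOn (fun p : ℝ × ℝ × ℝ => p.1) U := continuous_fst.continuousOn
    have c2 : ContinuousOn (fun p : ℝ × ℝ × ℝ => p.2.1) U :=
      (continuous_fst.comp continuous_snd).continuousOn
    have c3 : ContinuousOn (fun p : ℝ × ℝ × ℝ => p.2.2) U :=
      (continuous_snd.comp continuous_snd).continuousOn
    have cs : ContinuousOn (fun p : ℝ × ℝ × ℝ => p.1 + p.2.1) U := c1.add c2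
    have cψ : ContinuousOn (fun p : ℝ × ℝ × ℝ => ψ (p.1 + p.2.1)) U :=
      hp.cont.comp_continuousOn cs
    have cellψ : ContinuousOn (fun p : ℝ × ℝ × ℝ => ell (ψ (p.1 + p.2.1))) U :=
      continuous_ell.comp_continuousOn cψ
    have cells : ContinuousOn (fun p : ℝ × ℝ × ℝ => ell (p.1 + p.2.1)) U :=
      continuous_ell.comp_continuousOn cs
    have cdd : ContinuousOn (fun p : ℝ × ℝ × ℝ => dd ψ p.1 p.2.1) U := by
      unfold dd
      exact ((c2.sub c1).mul cellψ).div cells (fun p hp' => (hmem p hp').2)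
    have csm : ContinuousOn (fun p : ℝ × ℝ × ℝ => sm ψ p.1 p.2.1) U := by
      unfold sm
      exact (cψ.sub cdd).div_const 2
    have csM : ContinuousOn (fun p : ℝ × ℝ × ℝ => sM ψ p.1 p.2.1) U := by
      unfold sM
      exact (cψ.add cdd).div_const 2
    have hcont : ContinuousOn (fun p : ℝ × ℝ × ℝ => trf ψ p.1 p.2.1 p.2.2) U := by
      unfold trf
      exact csm.add (((csM.sub csm).mul (c3.sub c1)).div (c2.sub c1)
        (fun p hp' => ne_of_gt (hmem p hp').1))
    have huc := hUc.uniformContinuousOn_of_continuous hcont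
    rw [Metric.uniformContinuousOn_iff] at huc
    apply continuousAt_imap
    intro ε hε
    obtain ⟨δ', hδ', hd⟩ := huc ε hε
    refine ⟨min δ' η, lt_min hδ' hηpos, ?_⟩
    intro C hC x hx y hy hxy
    have hCη : dist C C₀ < η := lt_of_lt_of_le hC (min_le_right _ _)
    have hCδ : dist C C₀ < δ' := lt_of_lt_of_le hC (min_le_left _ _)
    have hmn := lt_of_le_of_lt (abs_mn_sub_le C C₀) hCη
    have hmx := lt_of_le_of_lt (abs_mx_sub_le C C₀) hCη
    have hmn' := abs_lt.1 hmn
    have hmx' := abs_lt.1 hmx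
    have hpU : ((mn C, mx C, x) : ℝ × ℝ × ℝ) ∈ U := by
      refine ⟨?_, ?_, rset_subset C hx⟩
      · constructor <;> simp only <;> linarith [hmn'.1, hmn'.2]
      · constructor <;> simp only <;> linarith [hmx'.1, hmx'.2]
    have hqU : ((m₀, M₀, y) : ℝ × ℝ × ℝ) ∈ U := by
      refine ⟨?_, ?_, rset_subset C₀ hy⟩
      · constructor <;> simp only <;> linarith
      · constructor <;> simp only <;> linarith
    have hdist : dist ((mn C, mx C, x) : ℝ × ℝ × ℝ) ((m₀, M₀, y) : ℝ × ℝ × ℝ) < δ' := by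
      rw [Prod.dist_eq]
      apply max_lt
      · rw [Real.dist_eq]
        exact lt_of_le_of_lt (abs_mn_sub_le C C₀) hCδ
      · rw [Prod.dist_eq]
        apply max_lt
        · rw [Real.dist_eq]
          exact lt_of_le_of_lt (abs_mx_sub_le C C₀) hCδ
        · rw [Real.dist_eq]
          exact lt_of_lt_of_le hxy (min_le_left _ _)
    have := hd _ hpU _ hqU hdist
    rw [Real.dist_eq] at this
    exact this.le

/-- The non-trivially induced homeomorphism of the symmetric product. -/
noncomputable def phiHomeo : SymmProd unitInterval n ≃ₜ SymmProd unitInterval n where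
  toFun := phiMap hp
  invFun := phiMap hp.symm
  left_inv := phiMap_inv hp
  right_inv := phiMap_inv hp.symm
  continuous_toFun := continuous_phiMap hp
  continuous_invFun := continuous_phiMap hp.symm

end phicont

end SP

namespace SP

noncomputable def psifun (s : ℝ) : ℝ := min (2*s) ((2*s+2)/3)
noncomputable def psifun' (y : ℝ) : ℝ := max (y/2) ((3*y-2)/2)

lemma psiPair : PsiPair psifun psifun' := by
  have hmono : StrictMono psifun := by
    intro a b h
    unfold psifun
    refine lt_min (lt_of_le_of_lt (min_le_left _ _) (by linarith))
      (lt_of_le_of_lt (min_le_right _ _) ?_)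
    rw [div_lt_div_iff₀ (by norm_num) (by norm_num)]
    linarith
  refine ⟨hmono, ?_, ?_, ?_, ?_, ?_, ?_⟩
  · exact ((continuous_const.mul continuous_id).min
      (((continuous_const.mul continuous_id).add continuous_const).div_const 3))
  · exact ((continuous_id.div_const 2).max
      (((continuous_const.mul continuous_id).sub continuous_const).div_const 2))
  · show min (2*(0:ℝ)) ((2*0+2)/3) = 0
    norm_num
  · show min (2*(2:ℝ)) ((2*2+2)/3) = 2
    norm_num
  · intro s
    rcases le_or_gt s (1/2) with h | h
    · have hs : psifun s = 2*s := min_eq_left (by rw [le_div_iff₀ (by norm_num : (0:ℝ) < 3)]; linarith)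
      rw [hs, psifun', max_eq_left (by linarith)]
      ring
    · have hs : psifun s = (2*s+2)/3 :=
        min_eq_right (by rw [div_le_iff₀ (by norm_num : (0:ℝ) < 3)]; linarith)
      rw [hs, psifun']
      have hy : (1:ℝ) ≤ (2*s+2)/3 := by rw [le_div_iff₀ (by norm_num : (0:ℝ) < 3)]; linarith
      rw [max_eq_right (by linarith)]
      ring
  · intro y
    rcases le_or_gt y 1 with h | h
    · have hs : psifun' y = y/2 := max_eq_left (by linarith)
      rw [hs, psifun, min_eq_left (by rw [le_div_iff₀ (by norm_num : (0:ℝ) < 3)]; linarith)]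
      ring
    · have hs : psifun' y = (3*y-2)/2 := max_eq_right (by linarith)
      rw [hs, psifun, min_eq_right (by rw [div_le_iff₀ (by norm_num : (0:ℝ) < 3)]; linarith)]
      ring

lemma trf_spec (x : ℝ) : trf psifun 0 (1/2) x = 2*x := by
  have h1 : psifun (0 + 1/2) = 1 := by
    show min (2*((0:ℝ)+1/2)) ((2*(0+1/2)+2)/3) = 1
    norm_num
  have h2 : ell (0 + 1/2) = 1/2 := by
    show min ((0:ℝ)+1/2) (2 - (0+1/2)) = 1/2
    norm_num
  have h3 : ell (1:ℝ) = 1 := by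
    show min (1:ℝ) (2 - 1) = 1
    norm_num
  have hdd : dd psifun 0 (1/2) = 1 := by
    rw [dd, h1, h2, h3]
    norm_num
  rw [trf, sM_sub_sm, hdd, sm, h1, hdd]
  norm_num
  ring

section canon
variable {k : ℕ} (hk : 2 ≤ k)

noncomputable def canA (k : ℕ) : Finset ℝ :=
  (Finset.range k).image (fun i : ℕ => (i : ℝ) / ((k:ℝ) - 1))
noncomputable def canB (k : ℕ) : Finset ℝ :=
  (Finset.range k).image (fun i : ℕ => (i : ℝ) / (2*((k:ℝ) - 1)))

include hk

lemma kpos : (0:ℝ) < (k:ℝ) - 1 := by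
  have : (1:ℝ) < (k:ℝ) := by exact_mod_cast hk
  linarith

lemma canA_card : (canA k).card = k := by
  have hc := kpos hk
  have hinj : Function.Injective (fun i : ℕ => (i : ℝ) / ((k:ℝ) - 1)) := by
    intro i j h
    field_simp at h
    exact_mod_cast h
  rw [canA, Finset.card_image_of_injective _ hinj, Finset.card_range]

lemma canB_card : (canB k).card = k := by
  have hc := kpos hk
  have hinj : Function.Injective (fun i : ℕ => (i : ℝ) / (2*((k:ℝ) - 1))) := by
    intro i j h
    have h2 : (0:ℝ) < 2*((k:ℝ)-1) := by linarith
    field_simp at h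
    exact_mod_cast h
  rw [canB, Finset.card_image_of_injective _ hinj, Finset.card_range]

lemma canA_sub : ↑(canA k) ⊆ Icc (0:ℝ) 1 := by
  intro x hx
  simp only [canA, Finset.coe_image, Set.mem_image, Finset.mem_coe, Finset.mem_range] at hx
  obtain ⟨i, hi, rfl⟩ := hx
  have hc := kpos hk
  constructor
  · positivity
  · rw [div_le_one hc]
    have : (i:ℝ) ≤ (k:ℝ) - 1 := by
      have : i ≤ k - 1 := by omega
      have h2 := Nat.cast_le (α := ℝ).2 this
      rwa [Nat.cast_sub (by omega), Nat.cast_one] at h2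
    linarith

lemma canB_le_half : ∀ x ∈ (canB k : Set ℝ), x ≤ 1/2 := by
  intro x hx
  simp only [canB, Finset.coe_image, Set.mem_image, Finset.mem_coe, Finset.mem_range] at hx
  obtain ⟨i, hi, rfl⟩ := hx
  have hc := kpos hk
  rw [div_le_iff₀ (by linarith)]
  have : (i:ℝ) ≤ (k:ℝ) - 1 := by
    have h1 : i ≤ k - 1 := by omega
    have h2 := Nat.cast_le (α := ℝ).2 h1
    rwa [Nat.cast_sub (by omega), Nat.cast_one] at h2
  linarith

lemma canB_sub : ↑(canB k) ⊆ Icc (0:ℝ) 1 := by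
  intro x hx
  refine ⟨?_, by linarith [canB_le_half hk x hx]⟩
  simp only [canB, Finset.coe_image, Set.mem_image, Finset.mem_coe, Finset.mem_range] at hx
  obtain ⟨i, hi, rfl⟩ := hx
  have hc := kpos hk
  positivity

lemma canA_mem0 : (0:ℝ) ∈ canA k := by
  rw [canA, Finset.mem_image]
  exact ⟨0, Finset.mem_range.2 (by omega), by norm_num⟩

lemma canB_mem0 : (0:ℝ) ∈ canB k := by
  rw [canB, Finset.mem_image]
  exact ⟨0, Finset.mem_range.2 (by omega), by norm_num⟩

lemma canA_mem1 : (1:ℝ) ∈ canA k := by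
  rw [canA, Finset.mem_image]
  refine ⟨k - 1, Finset.mem_range.2 (by omega), ?_⟩
  have hc := kpos hk
  rw [Nat.cast_sub (by omega), Nat.cast_one]
  field_simp

lemma canB_mem_half : (1/2 : ℝ) ∈ canB k := by
  rw [canB, Finset.mem_image]
  refine ⟨k - 1, Finset.mem_range.2 (by omega), ?_⟩
  have hc := kpos hk
  rw [Nat.cast_sub (by omega), Nat.cast_one]
  rw [div_eq_div_iff (by linarith) (by norm_num)]
  ring

lemma canB_not_mem1 : (1:ℝ) ∉ canB k := by
  intro h
  have := canB_le_half hk 1 (by exact_mod_cast h)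
  linarith

lemma canB_image : (fun x : ℝ => 2*x) '' ↑(canB k) = ↑(canA k) := by
  rw [canA, canB, Finset.coe_image, Finset.coe_image, Set.image_image]
  apply Set.image_congr
  intro i _
  have hc := kpos hk
  field_simp

end canon

end SP

namespace SP
variable {n : ℕ}

/-- Normalize a configuration containing `0` to a given target finite set. -/
lemma normalize (C : SymmProd unitInterval n) (Q : Finset ℝ) (hQsub : ↑Q ⊆ Icc (0:ℝ) 1)
    (hQ0 : (0:ℝ) ∈ Q) (hcard : Q.card = (rset C).ncard) (h0 : (0:ℝ) ∈ rset C)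
    (h1 : ((1:ℝ) ∈ rset C ↔ (1:ℝ) ∈ Q)) :
    ∃ (f g : ℝ → ℝ), GoodFun f g ∧ f '' rset C = ↑Q := by
  classical
  set P := (rset_finite C).toFinset with hP
  have hPco : ↑P = rset C := (rset_finite C).coe_toFinset
  have hPcard : P.card = (rset C).ncard := (Set.ncard_eq_toFinset_card _ (rset_finite C)).symm
  set P' := insert (1:ℝ) P with hP'
  set Q' := insert (1:ℝ) Q with hQ'
  have hcards : Q'.card = P'.card := by
    by_cases hm : (1:ℝ) ∈ rset C
    · rw [hP', hQ', Finset.insert_eq_self.2 (h1.1 hm),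
        Finset.insert_eq_self.2 (by rwa [hPco.symm] at hm : (1:ℝ) ∈ P)]
      rw [hcard, hPcard]
    · have hmP : (1:ℝ) ∉ P := by rwa [← hPco] at hm; 
      have hmQ : (1:ℝ) ∉ Q := fun hq => hm (h1.2 hq)
      rw [hP', hQ', Finset.card_insert_of_notMem hmP, Finset.card_insert_of_notMem hmQ,
        hcard, hPcard]
  obtain ⟨f, g, hgood, hmono, himg⟩ := interp P'.card P' Q' rfl hcards
    (by
      rw [hP', Finset.coe_insert]
      exact Set.insert_subset ⟨zero_le_one, le_refl 1⟩ (by rw [hPco]; exact rset_subset C))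
    (by
      rw [hQ', Finset.coe_insert]
      exact Set.insert_subset ⟨zero_le_one, le_refl 1⟩ hQsub)
    (Finset.mem_insert_of_mem (by rw [hP, Set.Finite.mem_toFinset]; exact h0))
    (Finset.mem_insert_self _ _)
    (Finset.mem_insert_of_mem hQ0)
    (Finset.mem_insert_self _ _)
  refine ⟨f, g, hgood, ?_⟩
  have hf1 : f 1 = 1 := hgood.map_one hmono
  by_cases hm : (1:ℝ) ∈ rset C
  · have hPP : P' = P := Finset.insert_eq_self.2 (by rwa [← hPco] at hm)
    have hQQ : Q' = Q := Finset.insert_eq_self.2 (h1.1 hm)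
    rw [← hPco, ← hPP, himg, hQQ]
  · have hmQ : (1:ℝ) ∉ Q := fun hq => hm (h1.2 hq)
    apply Set.Subset.antisymm
    · intro y hy
      obtain ⟨x, hx, rfl⟩ := hy
      have hxP' : x ∈ (P' : Set ℝ) := by
        rw [hP', Finset.coe_insert]
        exact Set.mem_insert_of_mem _ (by rw [hPco]; exact hx)
      have hfx : f x ∈ (Q' : Set ℝ) := by rw [← himg]; exact ⟨x, hxP', rfl⟩
      rw [hQ', Finset.coe_insert] at hfx
      rcases hfx with hfx | hfx
      · exfalso
        have hxI : x ∈ Icc (0:ℝ) 1 := rset_subset C hx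
        have h1I : (1:ℝ) ∈ Icc (0:ℝ) 1 := ⟨zero_le_one, le_refl 1⟩
        have : x = 1 := hmono.injOn hxI h1I (by rw [hf1]; exact hfx)
        rw [this] at hx
        exact hm hx
      · exact hfx
    · intro y hy
      have hyQ' : y ∈ (Q' : Set ℝ) := by
        rw [hQ', Finset.coe_insert]; exact Set.mem_insert_of_mem _ hy
      rw [← himg] at hyQ'
      obtain ⟨x, hxP', rfl⟩ := hyQ'
      rw [hP', Finset.coe_insert] at hxP'
      rcases hxP' with rfl | hxP
      · exfalso; rw [hf1] at hy; exact hmQ hy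
      · exact ⟨x, by rwa [hPco] at hxP, rfl⟩

/-- Any configuration containing `0`, with `k ≥ 2` points, can be moved to the canonical one. -/
lemma toAk (C : SymmProd unitInterval n) (k : ℕ) (hkC : (rset C).ncard = k) (hk : 2 ≤ k)
    (h0 : (0:ℝ) ∈ rset C) :
    ∃ H : SymmProd unitInterval n ≃ₜ SymmProd unitInterval n, rset (H C) = ↑(canA k) := by
  by_cases h1 : (1:ℝ) ∈ rset C
  · obtain ⟨f, g, hgood, himg⟩ := normalize C (canA k) (canA_sub hk) (canA_mem0 hk)
      (by rw [canA_card hk, hkC]) h0 (by simp [h1, canA_mem1 hk])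
    exact ⟨ihomeo hgood, by rw [ihomeo_apply, himg]⟩
  · obtain ⟨f, g, hgood, himg⟩ := normalize C (canB k) (canB_sub hk) (canB_mem0 hk)
      (by rw [canB_card hk, hkC]) h0 (by simp [h1, canB_not_mem1 hk])
    set D := ihomeo (n := n) hgood C with hD
    have hrD : rset D = ↑(canB k) := by rw [hD, ihomeo_apply, himg]
    have hmn : mn D = 0 := by
      apply le_antisymm
      · exact mn_le (by rw [hrD]; exact_mod_cast canB_mem0 hk)
      · exact mn_nonneg D
    have hmx : mx D = 1/2 := by
      apply le_antisymm
      · have := mx_mem D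
        rw [hrD] at this
        exact canB_le_half hk _ this
      · exact le_mx (by rw [hrD]; exact_mod_cast canB_mem_half hk)
    refine ⟨(ihomeo hgood).trans (phiHomeo psiPair), ?_⟩
    show rset (phiHomeo psiPair (ihomeo hgood C)) = _
    rw [show phiHomeo (n := n) psiPair (ihomeo hgood C) = phiMap psiPair D from rfl]
    rw [rset_phiMap, hmn, hmx, hrD]
    rw [Set.image_congr (fun x _ => trf_spec x)]
    exact canB_image hk

/-- Any admissible configuration can be moved to the canonical one. -/
lemma toAkFull (C : SymmProd unitInterval n) (k : ℕ) (hkC : (rset C).ncard = k) (hk : 2 ≤ k)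
    (hor : (0:ℝ) ∈ rset C ∨ (1:ℝ) ∈ rset C) :
    ∃ H : SymmProd unitInterval n ≃ₜ SymmProd unitInterval n, rset (H C) = ↑(canA k) := by
  rcases hor with h0 | h1
  · exact toAk C k hkC hk h0
  · set R := ihomeo (n := n) GoodFun.refl with hR
    have hrR : rset (R C) = (fun x : ℝ => 1 - x) '' rset C := ihomeo_apply _ _
    have h0R : (0:ℝ) ∈ rset (R C) := by
      rw [hrR]
      exact ⟨1, h1, by norm_num⟩
    have hcardR : (rset (R C)).ncard = k := by
      rw [hrR, Set.ncard_image_of_injective _ (fun a b h => by have : (1:ℝ) - a = 1 - b := h; linarith)]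
      exact hkC
    obtain ⟨H, hH⟩ := toAk (R C) k hcardR hk h0R
    exact ⟨R.trans H, hH⟩

end SP

open SP

theorem stmt7 (n : ℕ) (hn : 2 ≤ n) (A B : SymmProd unitInterval n)
    (hcard : A.toSet.ncard = B.toSet.ncard) (h2 : 2 ≤ A.toSet.ncard)
    (hA : (A.toSet ∩ {0, 1}).Nonempty) (hB : (B.toSet ∩ {0, 1}).Nonempty) :
    ∃ h : SymmProd unitInterval n ≃ₜ SymmProd unitInterval n, h B = A := by
  set k := A.toSet.ncard with hk
  have hkA : (rset A).ncard = k := by rw [rset_ncard]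
  have hkB : (rset B).ncard = k := by rw [rset_ncard, ← hcard]
  have endpoint : ∀ C : SymmProd unitInterval n, (C.toSet ∩ {0, 1}).Nonempty →
      (0:ℝ) ∈ rset C ∨ (1:ℝ) ∈ rset C := by
    intro C hC
    obtain ⟨x, hx1, hx2⟩ := hC
    rcases hx2 with h | h
    · left; exact ⟨x, hx1, by rw [h]; rfl⟩
    · right; exact ⟨x, hx1, by rw [Set.mem_singleton_iff.1 h]; rfl⟩
  obtain ⟨HA, hHA⟩ := toAkFull A k hkA h2 (endpoint A hA)
  obtain ⟨HB, hHB⟩ := toAkFull B k hkB h2 (endpoint B hB)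
  refine ⟨HB.trans HA.symm, ?_⟩
  show HA.symm (HB B) = A
  have : HB B = HA A := rset_inj (by rw [hHA, hHB])
  rw [this, Homeomorph.symm_apply_apply]
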